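/- Let Q ∈ Σ₂₀ be the permutation sending each j to j + 10 reduced modulo 20 into {1,…,20}, and let τ = (1,3,5,7,9)(2,4,6,8,10)(19,17,15,13,11)(20,18,16,14,12). Then there exists a permutation σ ∈ Σ₂₀ such that: σ is parity reversing (j and σ(j) have opposite parity for all j), σ has exactly 3 cycles, none of the cycles of σ has length 2, and σ ∘ Q ∘ σ = τ. -/

import Mathlib

namespace Stmt14Aux

abbrev α : Type := {j : ℕ // j ∈ Finset.Icc 1 20}

def fL : List ℕ := [2,7,8,19,12,13,10,17,6,11,14,3,20,15,16,1,4,5,18,9]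
def gL : List ℕ := [16,1,12,17,18,9,2,3,20,7,10,5,6,11,14,15,8,19,4,13]

def f (n : ℕ) : ℕ := fL.getD (n - 1) 0
def g (n : ℕ) : ℕ := gL.getD (n - 1) 0

lemma hf : ∀ n ∈ Finset.Icc 1 20, f n ∈ Finset.Icc 1 20 := by decide
lemma hg : ∀ n ∈ Finset.Icc 1 20, g n ∈ Finset.Icc 1 20 := by decide
lemma hgf : ∀ n ∈ Finset.Icc 1 20, g (f n) = n := by decide
lemma hfg : ∀ n ∈ Finset.Icc 1 20, f (g n) = n := by decide

def σ0 : Equiv.Perm α where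
  toFun j := ⟨f j.1, hf _ j.2⟩
  invFun j := ⟨g j.1, hg _ j.2⟩
  left_inv j := Subtype.ext (hgf _ j.2)
  right_inv j := Subtype.ext (hfg _ j.2)

def A : Finset α := Finset.univ.filter (fun x => (x : ℕ) ∈ ([1,2,7,10,11,14,15,16] : List ℕ))
def B : Finset α := Finset.univ.filter (fun x => (x : ℕ) ∈ ([3,8,17,4,19,18,5,12] : List ℕ))
def C : Finset α := Finset.univ.filter (fun x => (x : ℕ) ∈ ([6,13,20,9] : List ℕ))

lemma orbit_subset (σ : Equiv.Perm α) (S : Finset α)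
    (h1 : ∀ x ∈ S, σ x ∈ S) (h2 : ∀ x ∈ S, σ⁻¹ x ∈ S) {j : α} (hj : j ∈ S) :
    ∀ k : ℤ, (σ ^ k) j ∈ S := by
  intro k
  induction k using Int.induction_on with
  | zero => simpa using hj
  | succ n ih =>
      have : (σ ^ ((n : ℤ) + 1)) j = σ ((σ ^ (n : ℤ)) j) := by
        rw [add_comm, zpow_add, zpow_one, Equiv.Perm.mul_apply]
      rw [this]; exact h1 _ ih
  | pred n ih =>
      have : (σ ^ (-(n : ℤ) - 1)) j = σ⁻¹ ((σ ^ (-(n : ℤ))) j) := by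
        rw [sub_eq_add_neg, add_comm, zpow_add, zpow_neg_one, Equiv.Perm.mul_apply]
      rw [this]; exact h2 _ ih

lemma orbit_eq (S : Finset α)
    (h1 : ∀ x ∈ S, σ0 x ∈ S) (h2 : ∀ x ∈ S, σ0⁻¹ x ∈ S)
    (h3 : ∀ j ∈ S, ∀ x ∈ S, ∃ i ∈ Finset.range 8, (σ0 ^ i) j = x)
    {j : α} (hj : j ∈ S) :
    (Set.range fun k : ℤ => (σ0 ^ k) j) = (S : Set α) := by
  apply Set.eq_of_subset_of_subset
  · rintro x ⟨k, rfl⟩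
    exact orbit_subset σ0 S h1 h2 hj k
  · intro x hx
    obtain ⟨i, _, hi⟩ := h3 j hj x hx
    exact ⟨(i : ℤ), by show (σ0 ^ ((i : ℕ) : ℤ)) j = x; rw [zpow_natCast]; exact hi⟩

lemma hA1 : ∀ x ∈ A, σ0 x ∈ A := by decide
lemma hA2 : ∀ x ∈ A, σ0⁻¹ x ∈ A := by decide
lemma hA3 : ∀ j ∈ A, ∀ x ∈ A, ∃ i ∈ Finset.range 8, (σ0 ^ i) j = x := by decide
lemma hB1 : ∀ x ∈ B, σ0 x ∈ B := by decide
lemma hB2 : ∀ x ∈ B, σ0⁻¹ x ∈ B := by decide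
lemma hB3 : ∀ j ∈ B, ∀ x ∈ B, ∃ i ∈ Finset.range 8, (σ0 ^ i) j = x := by decide
lemma hC1 : ∀ x ∈ C, σ0 x ∈ C := by decide
lemma hC2 : ∀ x ∈ C, σ0⁻¹ x ∈ C := by decide
lemma hC3 : ∀ j ∈ C, ∀ x ∈ C, ∃ i ∈ Finset.range 8, (σ0 ^ i) j = x := by decide

lemma cover : ∀ j : α, j ∈ A ∨ j ∈ B ∨ j ∈ C := by decide

lemma orbit_cases (j : α) :
    (Set.range fun k : ℤ => (σ0 ^ k) j) = (A : Set α) ∨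
    (Set.range fun k : ℤ => (σ0 ^ k) j) = (B : Set α) ∨
    (Set.range fun k : ℤ => (σ0 ^ k) j) = (C : Set α) := by
  rcases cover j with h | h | h
  · exact Or.inl (orbit_eq A hA1 hA2 hA3 h)
  · exact Or.inr (Or.inl (orbit_eq B hB1 hB2 hB3 h))
  · exact Or.inr (Or.inr (orbit_eq C hC1 hC2 hC3 h))

def tf (n : ℕ) : ℕ :=
  if n ≤ 8 then n + 2 else if n = 9 then 1 else if n = 10 then 2
  else if n = 11 then 19 else if n = 12 then 20 else n - 2

lemma key : ∀ n ∈ Finset.Icc 1 20, f ((f n - 1 + 10) % 20 + 1) = tf n := by decide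

end Stmt14Aux

open Stmt14Aux in
theorem stmt_14 (Q τ : Equiv.Perm {j : ℕ // j ∈ Finset.Icc 1 20})
    (hQ : ∀ j : {j : ℕ // j ∈ Finset.Icc 1 20}, (Q j : ℕ) = ((j : ℕ) - 1 + 10) % 20 + 1)
    (hτ : ∀ j : {j : ℕ // j ∈ Finset.Icc 1 20},
      ((j : ℕ) ≤ 8 → (τ j : ℕ) = (j : ℕ) + 2) ∧
      ((j : ℕ) = 9 → (τ j : ℕ) = 1) ∧
      ((j : ℕ) = 10 → (τ j : ℕ) = 2) ∧
      (13 ≤ (j : ℕ) → (τ j : ℕ) = (j : ℕ) - 2) ∧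
      ((j : ℕ) = 11 → (τ j : ℕ) = 19) ∧
      ((j : ℕ) = 12 → (τ j : ℕ) = 20)) :
    ∃ σ : Equiv.Perm {j : ℕ // j ∈ Finset.Icc 1 20},
      (∀ j : {j : ℕ // j ∈ Finset.Icc 1 20}, (j : ℕ) % 2 ≠ (σ j : ℕ) % 2) ∧
      {s : Set {j : ℕ // j ∈ Finset.Icc 1 20} |
        ∃ j, s = Set.range fun k : ℤ => (σ ^ k) j}.ncard = 3 ∧
      (∀ j, (Set.range fun k : ℤ => (σ ^ k) j).ncard ≠ 2) ∧
      σ * Q * σ = τ := by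
  refine ⟨σ0, ?_, ?_, ?_, ?_⟩
  · decide
  · have hset : {s : Set α | ∃ j, s = Set.range fun k : ℤ => (σ0 ^ k) j} =
        {(A : Set α), (B : Set α), (C : Set α)} := by
      ext s
      constructor
      · rintro ⟨j, rfl⟩
        rcases orbit_cases j with h | h | h <;> simp [h]
      · rintro (rfl | rfl | rfl)
        · exact ⟨⟨1, by decide⟩, (orbit_eq A hA1 hA2 hA3 (by decide)).symm⟩
        · exact ⟨⟨3, by decide⟩, (orbit_eq B hB1 hB2 hB3 (by decide)).symm⟩
        · exact ⟨⟨6, by decide⟩, (orbit_eq C hC1 hC2 hC3 (by decide)).symm⟩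
    rw [hset]
    have hAB : (A : Set α) ≠ (B : Set α) := by
      simp only [ne_eq, Finset.coe_inj]; decide
    have hAC : (A : Set α) ≠ (C : Set α) := by
      simp only [ne_eq, Finset.coe_inj]; decide
    have hBC : (B : Set α) ≠ (C : Set α) := by
      simp only [ne_eq, Finset.coe_inj]; decide
    rw [Set.ncard_insert_of_notMem (by simp [hAB, hAC]),
      Set.ncard_insert_of_notMem (by simp [hBC]), Set.ncard_singleton]
  · intro j
    rcases orbit_cases j with h | h | h <;>
      rw [h, Set.ncard_coe_finset] <;> decide
  · ext j
    simp only [Equiv.Perm.mul_apply]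
    have hτv : (τ j : ℕ) = tf (j : ℕ) := by
      obtain ⟨h1, h2, h3, h4, h5, h6⟩ := hτ j
      have hj := j.2
      rw [Finset.mem_Icc] at hj
      unfold tf
      rcases Nat.lt_or_ge (j : ℕ) 9 with h | h
      · rw [if_pos (by omega)]; exact h1 (by omega)
      rcases Nat.lt_or_ge (j : ℕ) 13 with h' | h'
      · interval_cases hj : (j : ℕ) <;> simp_all
      · rw [if_neg (by omega), if_neg (by omega), if_neg (by omega),
          if_neg (by omega), if_neg (by omega)]
        exact h4 h'
    have hQv : (Q (σ0 j) : ℕ) = (f (j : ℕ) - 1 + 10) % 20 + 1 := hQ (σ0 j)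
    show f ((Q (σ0 j) : ℕ)) = (τ j : ℕ)
    rw [hQv, hτv]
    exact key _ j.2
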